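/- Let X₁ and X₂ be Veblen multi-hypergraphs of rank k with disjoint vertex sets and disjoint edge sets, and let X = X₁ ⊔ X₂ be their disjoint union. Then for every integer n ≥ 0, Δ(n, X) = Δ(n, X₁) · Δ(n, X₂). -/

import Mathlib

/-! Multi-hypergraphs of rank `k` are presented by an edge-endpoint map
`φ : E → Finset V` (with `(φ e).card = k`); edges `e, f` are *parallel* when
`φ e = φ f`.  A sub-multi-hypergraph is given by a set `A : Set E` of edges, its
vertex set being the support `hSupp φ A`. -/

/-- The vertex support of a set of edges. -/
def hSupp {V E : Type} (φ : E → Finset V) (A : Set E) : Set V :=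
  {v | ∃ e ∈ A, v ∈ φ e}

/-- The degree of a vertex in a set of edges. -/
noncomputable def hDeg {V E : Type} (φ : E → Finset V) (A : Set E) (v : V) : ℕ :=
  Nat.card {e : E // e ∈ A ∧ v ∈ φ e}

/-- A set of edges is Veblen when every vertex degree is divisible by `k`. -/
def hVeblen {V E : Type} (φ : E → Finset V) (k : ℕ) (A : Set E) : Prop :=
  ∀ v : V, k ∣ hDeg φ A v

/-- A nonempty set of edges is connected when any two of its edges are joined by a
chain of edges in it, consecutive ones sharing a vertex. -/
def hConnected {V E : Type} [DecidableEq V] (φ : E → Finset V) (A : Set E) : Prop :=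
  A.Nonempty ∧ ∀ e ∈ A, ∀ f ∈ A,
    Relation.ReflTransGen (fun a b => a ∈ A ∧ b ∈ A ∧ ((φ a) ∩ (φ b)).Nonempty) e f

/-- `DWalkFrom ψ u v l` : the list of arcs `l` is a directed walk from `u` to `v`. -/
def DWalkFrom {V A : Type} (ψ : A → V × V) : V → V → List A → Prop
  | u, v, [] => u = v
  | u, v, a :: l => (ψ a).1 = u ∧ DWalkFrom ψ (ψ a).2 v l

/-- One-step cyclic rotation of a based closed walk. -/
def drot {V A : Type} (ψ : A → V × V) : V × List A → V × List A
  | (u, []) => (u, [])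
  | (_, a :: l) => ((ψ a).2, l ++ [a])

/-- The number of Eulerian circuits of a multi-digraph: Eulerian trails (closed trails
using every arc) up to cyclic rotation of the arcs. -/
noncomputable def circCount {V A : Type} (ψ : A → V × V) : ℕ :=
  Nat.card (Quot (fun a b :
      {q : V × List A // DWalkFrom ψ q.1 q.1 q.2 ∧ q.2.Nodup ∧ ∀ x : A, x ∈ q.2} =>
    drot ψ a.1 = b.1))

/-- In-degree of a vertex in a multi-digraph. -/
noncomputable def dInDeg {V A : Type} (ψ : A → V × V) (v : V) : ℕ :=
  Nat.card {a : A // (ψ a).2 = v}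

/-- Out-degree of a vertex in a multi-digraph. -/
noncomputable def dOutDeg {V A : Type} (ψ : A → V × V) (v : V) : ℕ :=
  Nat.card {a : A // (ψ a).1 = v}

/-- A multi-digraph is connected (on the vertices it touches). -/
def DigConn {V A : Type} (ψ : A → V × V) : Prop :=
  ∀ u v : V, (∃ a : A, (ψ a).1 = u ∨ (ψ a).2 = u) →
    (∃ a : A, (ψ a).1 = v ∨ (ψ a).2 = v) →
    Relation.ReflTransGen (fun x y => ∃ a : A, ψ a = (x, y) ∨ ψ a = (y, x)) u v

/-- A multi-digraph is Eulerian: connected with in-degree equal to out-degree at every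
vertex. -/
def DigEulerian {V A : Type} (ψ : A → V × V) : Prop :=
  DigConn ψ ∧ ∀ v : V, dInDeg ψ v = dOutDeg ψ v

/-- A rooting of the sub-multi-hypergraph `A`: a tuple of rooted stars
`(S_{v₁}(e₁), …, S_{v_d}(e_d))`, i.e. a list of (root, edge) pairs whose roots are
nondecreasing, whose edges enumerate `A` without repetition, with each root a vertex of
its edge, and in which every vertex occurs as some root. -/
def IsRooting {V E : Type} [LinearOrder V] (φ : E → Finset V) (A : Set E)
    (l : List (V × E)) : Prop :=
  List.Pairwise (· ≤ ·) (l.map Prod.fst) ∧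
  (l.map Prod.snd).Nodup ∧
  (∀ e : E, e ∈ l.map Prod.snd ↔ e ∈ A) ∧
  (∀ p ∈ l, p.1 ∈ φ p.2) ∧
  ∀ v ∈ hSupp φ A, v ∈ l.map Prod.fst

/-- The arcs of the multi-digraph `D_R` of a rooting `R = l`: for the `j`-th star
`S_{v_j}(e_j)` and each `w ∈ e_j \ {v_j}`, an arc `(v_j, w)`. -/
def RArc {V E : Type} (φ : E → Finset V) (l : List (V × E)) : Type :=
  {x : Fin l.length × V // x.2 ∈ φ (l.get x.1).2 ∧ x.2 ≠ (l.get x.1).1}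

/-- The endpoint map of the multi-digraph `D_R` of a rooting. -/
def rψ {V E : Type} (φ : E → Finset V) (l : List (V × E)) : RArc φ l → V × V :=
  fun a => ((l.get a.1.1).1, a.1.2)

/-- The associated coefficient `C_Y` of a (connected Veblen) sub-multi-hypergraph `A`:
`C_A = ∑_{R Eulerian rooting} |𝔠(D_R)| / ∏_v (deg⁻_{D_R}(v))!`. -/
noncomputable def assocC {V E : Type} [Fintype V] [LinearOrder V]
    (φ : E → Finset V) (A : Set E) : ℚ :=
  ∑ᶠ R : {l : List (V × E) // IsRooting φ A l ∧ DigEulerian (rψ φ l)},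
    (circCount (rψ φ R.1) : ℚ) /
      ∏ v : V, (Nat.factorial (dInDeg (rψ φ R.1) v) : ℚ)

/-- A partition of the edge set `B` into nonempty connected Veblen parts. -/
def hAdmissible {V E : Type} [DecidableEq V] (φ : E → Finset V) (k : ℕ) (B : Set E)
    (S : Set (Set E)) : Prop :=
  (∀ A ∈ S, A.Nonempty ∧ A ⊆ B ∧ hConnected φ A ∧ hVeblen φ k A) ∧
  (∀ A ∈ S, ∀ A' ∈ S, A ≠ A' → A ∩ A' = ∅) ∧
  (∀ e ∈ B, ∃ A ∈ S, e ∈ A)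

/-- A permutation in `Sym_∼(B)`: it maps each edge to a parallel edge and fixes edges
outside `B`. -/
def ParPerm {V E : Type} (φ : E → Finset V) (B : Set E) (σ : Equiv.Perm E) : Prop :=
  (∀ e, φ (σ e) = φ e) ∧ ∀ e ∉ B, σ e = e

/-- Two parts are equivalent when some permutation in `Sym_∼(B)` maps one onto the
other. -/
def PartEquiv {V E : Type} (φ : E → Finset V) (B : Set E) (A A' : Set E) : Prop :=
  ∃ σ : Equiv.Perm E, ParPerm φ B σ ∧ σ '' A = A'

/-- Two partitions are in the same orbit of `Sym_∼(B)`. -/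
def OrbEquiv {V E : Type} (φ : E → Finset V) (B : Set E) (S S' : Set (Set E)) : Prop :=
  ∃ σ : Equiv.Perm E, ParPerm φ B σ ∧ (fun A : Set E => σ '' A) '' S = S'

/-- `α_S` : the product, over the equivalence classes of the parts of `S` under
`PartEquiv`, of the class sizes. -/
noncomputable def alphaS {V E : Type} (φ : E → Finset V) (B : Set E)
    (S : Set (Set E)) : ℚ :=
  ∏ᶠ q : Quot (fun A A' : S => PartEquiv φ B A.1 A'.1),
    (Nat.card {A : S // Quot.mk _ A = q} : ℚ)

/-- The summand of `Δ(n, X)` attached to a partition `S` of the edge set `B`: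
`(-(k-1)ⁿ)^{c(S)} · C_S / α_S` where `c(S)` is the number of parts and
`C_S = ∏_{A ∈ S} C_A`. -/
noncomputable def deltaTerm {V E : Type} [Fintype V] [LinearOrder V]
    (φ : E → Finset V) (k n : ℕ) (B : Set E) (S : Set (Set E)) : ℚ :=
  (-(((k : ℚ) - 1) ^ n)) ^ Nat.card S * (∏ᶠ A ∈ S, assocC φ A) / alphaS φ B S

/-- `T` is a set of representatives for the orbits, under `Sym_∼(B)`, of the partitions
of `B` into nonempty connected Veblen parts. -/
def IsOrbitReps {V E : Type} [DecidableEq V] (φ : E → Finset V) (k : ℕ) (B : Set E)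
    (T : Set (Set (Set E))) : Prop :=
  (∀ S ∈ T, hAdmissible φ k B S) ∧
  ∀ S : Set (Set E), hAdmissible φ k B S → ∃! S', S' ∈ T ∧ OrbEquiv φ B S S'

section DigraphTransport

variable {V A A' : Type}

lemma dWalkFrom_map (ε : A ≃ A') {ψ : A → V × V} {ψ' : A' → V × V}
    (h : ∀ a, ψ' (ε a) = ψ a) :
    ∀ (l : List A) (u v : V), DWalkFrom ψ' u v (l.map ε) ↔ DWalkFrom ψ u v l := by
  intro l
  induction l with
  | nil => intro u v; exact Iff.rfl
  | cons a l ih => intro u v; simp [DWalkFrom, h, ih]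

lemma drot_map (ε : A ≃ A') {ψ : A → V × V} {ψ' : A' → V × V}
    (h : ∀ a, ψ' (ε a) = ψ a) (q : V × List A) :
    drot ψ' (q.1, q.2.map ε) = ((drot ψ q).1, (drot ψ q).2.map ε) := by
  obtain ⟨u, l⟩ := q
  cases l with
  | nil => rfl
  | cons a l => simp [drot, h]

lemma circCount_congr (ε : A ≃ A') {ψ : A → V × V} {ψ' : A' → V × V}
    (h : ∀ a, ψ' (ε a) = ψ a) : circCount ψ' = circCount ψ := by
  let eList : List A ≃ List A' :=
    ⟨List.map ε, List.map ε.symm, fun l => by simp, fun l => by simp⟩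
  let F : V × List A ≃ V × List A' := (Equiv.refl V).prodCongr eList
  have hF : ∀ q : V × List A, F q = (q.1, q.2.map ε) := fun q => rfl
  have hpred : ∀ q : V × List A,
      (DWalkFrom ψ q.1 q.1 q.2 ∧ q.2.Nodup ∧ ∀ x : A, x ∈ q.2) ↔
      (DWalkFrom ψ' (F q).1 (F q).1 (F q).2 ∧ (F q).2.Nodup ∧ ∀ x : A', x ∈ (F q).2) := by
    intro q
    rw [hF]
    constructor
    · rintro ⟨h1, h2, h3⟩
      refine ⟨(dWalkFrom_map ε h _ _ _).2 h1, List.nodup_map_iff ε.injective |>.2 h2, ?_⟩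
      intro x
      have : ε.symm x ∈ q.2 := h3 _
      simpa using List.mem_map_of_mem (f := ε) this
    · rintro ⟨h1, h2, h3⟩
      refine ⟨(dWalkFrom_map ε h _ _ _).1 h1, List.nodup_map_iff ε.injective |>.1 h2, ?_⟩
      intro x
      have := h3 (ε x)
      rcases List.mem_map.1 this with ⟨y, hy, hyx⟩
      rwa [← ε.injective hyx]
  let E2 : {q : V × List A // DWalkFrom ψ q.1 q.1 q.2 ∧ q.2.Nodup ∧ ∀ x : A, x ∈ q.2} ≃
      {q : V × List A' // DWalkFrom ψ' q.1 q.1 q.2 ∧ q.2.Nodup ∧ ∀ x : A', x ∈ q.2} :=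
    Equiv.subtypeEquiv F hpred
  unfold circCount
  refine (Nat.card_congr (Quot.congr E2 ?_)).symm
  intro a b
  show drot ψ a.1 = b.1 ↔ drot ψ' (E2 a).1 = (E2 b).1
  have ha : (E2 a).1 = (a.1.1, a.1.2.map ε) := rfl
  have hb : (E2 b).1 = (b.1.1, b.1.2.map ε) := rfl
  rw [ha, hb, drot_map ε h a.1]
  constructor
  · intro hab; rw [hab]
  · intro hab
    rw [Prod.mk.injEq] at hab
    exact Prod.ext hab.1 ((List.map_injective_iff.2 ε.injective) hab.2)

lemma dInDeg_congr (ε : A ≃ A') {ψ : A → V × V} {ψ' : A' → V × V}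
    (h : ∀ a, ψ' (ε a) = ψ a) (v : V) : dInDeg ψ' v = dInDeg ψ v := by
  unfold dInDeg
  exact (Nat.card_congr (Equiv.subtypeEquiv ε (fun a => by rw [h a]))).symm

lemma dOutDeg_congr (ε : A ≃ A') {ψ : A → V × V} {ψ' : A' → V × V}
    (h : ∀ a, ψ' (ε a) = ψ a) (v : V) : dOutDeg ψ' v = dOutDeg ψ v := by
  unfold dOutDeg
  exact (Nat.card_congr (Equiv.subtypeEquiv ε (fun a => by rw [h a]))).symm

lemma digConn_congr (ε : A ≃ A') {ψ : A → V × V} {ψ' : A' → V × V}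
    (h : ∀ a, ψ' (ε a) = ψ a) : DigConn ψ' ↔ DigConn ψ := by
  have hψ' : ∀ a' : A', ψ' a' = ψ (ε.symm a') := fun a' => by
    rw [← h (ε.symm a'), Equiv.apply_symm_apply]
  have hex : ∀ u : V, (∃ a : A', (ψ' a).1 = u ∨ (ψ' a).2 = u) ↔
      (∃ a : A, (ψ a).1 = u ∨ (ψ a).2 = u) := by
    intro u
    constructor
    · rintro ⟨a, ha⟩; exact ⟨ε.symm a, by rwa [hψ' a] at ha⟩
    · rintro ⟨a, ha⟩; exact ⟨ε a, by rwa [h a]⟩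
  have hrel : ∀ x y : V, (∃ a : A', ψ' a = (x, y) ∨ ψ' a = (y, x)) ↔
      (∃ a : A, ψ a = (x, y) ∨ ψ a = (y, x)) := by
    intro x y
    constructor
    · rintro ⟨a, ha⟩; exact ⟨ε.symm a, by rwa [hψ' a] at ha⟩
    · rintro ⟨a, ha⟩; exact ⟨ε a, by rwa [h a]⟩
  unfold DigConn
  constructor
  · intro H u v hu hv
    exact Relation.ReflTransGen.mono (fun x y hxy => (hrel x y).1 hxy) _ _
      (H u v ((hex u).2 hu) ((hex v).2 hv))
  · intro H u v hu hv
    exact Relation.ReflTransGen.mono (fun x y hxy => (hrel x y).2 hxy) _ _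
      (H u v ((hex u).1 hu) ((hex v).1 hv))

lemma digEulerian_congr (ε : A ≃ A') {ψ : A → V × V} {ψ' : A' → V × V}
    (h : ∀ a, ψ' (ε a) = ψ a) : DigEulerian ψ' ↔ DigEulerian ψ := by
  unfold DigEulerian
  rw [digConn_congr ε h]
  constructor
  · rintro ⟨h1, h2⟩; exact ⟨h1, fun v => by rw [← dInDeg_congr ε h, ← dOutDeg_congr ε h]; exact h2 v⟩
  · rintro ⟨h1, h2⟩; exact ⟨h1, fun v => by rw [dInDeg_congr ε h, dOutDeg_congr ε h]; exact h2 v⟩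

end DigraphTransport
section RootingTransport

variable {V E : Type}

/-- Relabel the edges of a rooting list by a permutation. -/
def lmap (σ : Equiv.Perm E) (l : List (V × E)) : List (V × E) :=
  l.map (fun p => (p.1, σ p.2))

lemma lmap_length (σ : Equiv.Perm E) (l : List (V × E)) :
    (lmap σ l).length = l.length := List.length_map _

lemma lmap_get (σ : Equiv.Perm E) (l : List (V × E)) (i : Fin l.length) :
    (lmap σ l).get (Fin.cast (lmap_length σ l).symm i) = ((l.get i).1, σ (l.get i).2) := by
  simp [lmap]
  exact ⟨rfl, rfl⟩

lemma lmap_lmap (σ τ : Equiv.Perm E) (l : List (V × E)) :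
    lmap σ (lmap τ l) = lmap (τ.trans σ) l := by
  simp [lmap, List.map_map]

lemma lmap_inv (σ : Equiv.Perm E) (l : List (V × E)) :
    lmap σ (lmap σ⁻¹ l) = l := by
  rw [lmap_lmap]
  have : (σ⁻¹.trans σ) = Equiv.refl E := by
    ext e; simp
  rw [this]
  simp [lmap]

variable (φ : E → Finset V)

def rarcEquiv (σ : Equiv.Perm E) (hσ : ∀ e, φ (σ e) = φ e) (l : List (V × E)) :
    RArc φ l ≃ RArc φ (lmap σ l) where
  toFun x := ⟨(Fin.cast (lmap_length σ l).symm x.1.1, x.1.2), by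
    rw [lmap_get σ l x.1.1]
    exact ⟨by rw [hσ]; exact x.2.1, x.2.2⟩⟩
  invFun y := ⟨(Fin.cast (lmap_length σ l) y.1.1, y.1.2), by
    have hy := y.2
    have : y.1.1 = Fin.cast (lmap_length σ l).symm (Fin.cast (lmap_length σ l) y.1.1) := by
      ext; simp
    rw [this, lmap_get σ l] at hy
    exact ⟨by rw [hσ] at hy; exact hy.1, hy.2⟩⟩
  left_inv x := by
    apply Subtype.ext
    apply Prod.ext
    · ext; simp
    · rfl
  right_inv y := by
    apply Subtype.ext
    apply Prod.ext
    · ext; simp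
    · rfl

lemma rψ_rarcEquiv (σ : Equiv.Perm E) (hσ : ∀ e, φ (σ e) = φ e) (l : List (V × E))
    (x : RArc φ l) : rψ φ (lmap σ l) (rarcEquiv φ σ hσ l x) = rψ φ l x := by
  unfold rψ
  have h1 : ((rarcEquiv φ σ hσ l x).1.1) = Fin.cast (lmap_length σ l).symm x.1.1 := rfl
  have h2 : ((rarcEquiv φ σ hσ l x).1.2) = x.1.2 := rfl
  rw [h1, h2, lmap_get σ l x.1.1]

lemma hSupp_image (σ : Equiv.Perm E) (hσ : ∀ e, φ (σ e) = φ e) (A : Set E) :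
    hSupp φ (σ '' A) = hSupp φ A := by
  ext v
  constructor
  · rintro ⟨e, ⟨a, ha, rfl⟩, hv⟩
    exact ⟨a, ha, by rwa [hσ] at hv⟩
  · rintro ⟨a, ha, hv⟩
    exact ⟨σ a, ⟨a, ha, rfl⟩, by rwa [hσ]⟩

lemma isRooting_lmap [LinearOrder V] (σ : Equiv.Perm E) (hσ : ∀ e, φ (σ e) = φ e)
    (A : Set E) (l : List (V × E)) (h : IsRooting φ A l) :
    IsRooting φ (σ '' A) (lmap σ l) := by
  obtain ⟨h1, h2, h3, h4, h5⟩ := h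
  have hfst : (lmap σ l).map Prod.fst = l.map Prod.fst := by
    unfold lmap; rw [List.map_map]; rfl
  have hsnd : (lmap σ l).map Prod.snd = (l.map Prod.snd).map σ := by
    unfold lmap; rw [List.map_map, List.map_map]; rfl
  refine ⟨by rwa [hfst], ?_, ?_, ?_, ?_⟩
  · rw [hsnd]
    exact h2.map (Equiv.injective σ)
  · intro e
    rw [hsnd]
    constructor
    · intro he
      rcases List.mem_map.1 he with ⟨f, hf, rfl⟩
      exact ⟨f, (h3 f).1 hf, rfl⟩
    · rintro ⟨f, hf, rfl⟩
      exact List.mem_map_of_mem ((h3 f).2 hf)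
  · intro p hp
    rcases List.mem_map.1 hp with ⟨q, hq, rfl⟩
    simpa [hσ] using h4 q hq
  · intro v hv
    rw [hfst]
    exact h5 v (by rwa [hSupp_image φ σ hσ] at hv)

variable [Fintype V] [LinearOrder V]

def rootingEquiv (σ : Equiv.Perm E) (hσ : ∀ e, φ (σ e) = φ e) (A : Set E) :
    {l : List (V × E) // IsRooting φ A l ∧ DigEulerian (rψ φ l)} ≃
    {l : List (V × E) // IsRooting φ (σ '' A) l ∧ DigEulerian (rψ φ l)} where
  toFun R := ⟨lmap σ R.1, isRooting_lmap φ σ hσ A R.1 R.2.1,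
    (digEulerian_congr (rarcEquiv φ σ hσ R.1) (rψ_rarcEquiv φ σ hσ R.1)).2 R.2.2⟩
  invFun R := ⟨lmap σ⁻¹ R.1, by
      have hσ' : ∀ e, φ (σ⁻¹ e) = φ e := fun e => by
        rw [← hσ (σ⁻¹ e), show σ (σ⁻¹ e) = e from σ.apply_symm_apply e]
      have := isRooting_lmap φ σ⁻¹ hσ' (σ '' A) R.1 R.2.1
      have himg : (σ⁻¹ : Equiv.Perm E) '' (σ '' A) = A := by
        rw [Set.image_image]
        simp
      rwa [himg] at this,
    by
      have hσ' : ∀ e, φ (σ⁻¹ e) = φ e := fun e => by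
        rw [← hσ (σ⁻¹ e), show σ (σ⁻¹ e) = e from σ.apply_symm_apply e]
      exact (digEulerian_congr (rarcEquiv φ σ⁻¹ hσ' R.1) (rψ_rarcEquiv φ σ⁻¹ hσ' R.1)).2 R.2.2⟩
  left_inv R := by
    apply Subtype.ext
    show lmap σ⁻¹ (lmap σ R.1) = R.1
    rw [lmap_lmap]
    have : (σ.trans σ⁻¹) = Equiv.refl E := by ext e; simp
    rw [this]; simp [lmap]
  right_inv R := by
    apply Subtype.ext
    exact lmap_inv σ R.1

lemma assocC_image (σ : Equiv.Perm E) (hσ : ∀ e, φ (σ e) = φ e) (A : Set E) :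
    assocC φ (σ '' A) = assocC φ A := by
  unfold assocC
  rw [← finsum_comp_equiv (rootingEquiv φ σ hσ A)]
  refine finsum_congr fun R => ?_
  have hval : ((rootingEquiv φ σ hσ A) R).1 = lmap σ R.1 := rfl
  rw [hval]
  rw [circCount_congr (rarcEquiv φ σ hσ R.1) (rψ_rarcEquiv φ σ hσ R.1)]
  congr 1
  refine Finset.prod_congr rfl fun v _ => ?_
  rw [dInDeg_congr (rarcEquiv φ σ hσ R.1) (rψ_rarcEquiv φ σ hσ R.1)]

end RootingTransport
section Sides

variable {V E : Type} {φ : E → Finset V} {A₁ : Set E}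

lemma not_both_sides (hdisj : hSupp φ A₁ ∩ hSupp φ A₁ᶜ = ∅) {e f : E} {v : V}
    (hve : v ∈ φ e) (hvf : v ∈ φ f) (he : e ∈ A₁) (hf : f ∉ A₁) : False := by
  have : v ∈ hSupp φ A₁ ∩ hSupp φ A₁ᶜ := ⟨⟨e, he, hve⟩, ⟨f, hf, hvf⟩⟩
  rw [hdisj] at this
  exact this

lemma side_iff (hne : ∀ e : E, (φ e).Nonempty)
    (hdisj : hSupp φ A₁ ∩ hSupp φ A₁ᶜ = ∅) {σ : Equiv.Perm E}
    (hσ : ∀ e, φ (σ e) = φ e) (e : E) : σ e ∈ A₁ ↔ e ∈ A₁ := by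
  obtain ⟨v, hv⟩ := hne e
  have hv' : v ∈ φ (σ e) := by rw [hσ]; exact hv
  constructor
  · intro h
    by_contra h'
    exact not_both_sides hdisj hv' hv h h'
  · intro h
    by_contra h'
    exact not_both_sides hdisj hv hv' h h'

lemma image_side (hne : ∀ e : E, (φ e).Nonempty)
    (hdisj : hSupp φ A₁ ∩ hSupp φ A₁ᶜ = ∅) {σ : Equiv.Perm E}
    (hσ : ∀ e, φ (σ e) = φ e) {A : Set E} (hA : A ⊆ A₁) : σ '' A ⊆ A₁ := by
  rintro _ ⟨e, he, rfl⟩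
  exact (side_iff hne hdisj hσ e).2 (hA he)

lemma image_side_compl (hne : ∀ e : E, (φ e).Nonempty)
    (hdisj : hSupp φ A₁ ∩ hSupp φ A₁ᶜ = ∅) {σ : Equiv.Perm E}
    (hσ : ∀ e, φ (σ e) = φ e) {A : Set E} (hA : A ⊆ A₁ᶜ) : σ '' A ⊆ A₁ᶜ := by
  rintro _ ⟨e, he, rfl⟩
  intro hmem
  exact (hA he) ((side_iff hne hdisj hσ e).1 hmem)

variable [DecidableEq V]

lemma shared_vertex_side (hdisj : hSupp φ A₁ ∩ hSupp φ A₁ᶜ = ∅) {e f : E}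
    (h : ((φ e) ∩ (φ f)).Nonempty) : (e ∈ A₁ ↔ f ∈ A₁) := by
  obtain ⟨v, hv⟩ := h
  rw [Finset.mem_inter] at hv
  constructor
  · intro he
    by_contra hf
    exact not_both_sides hdisj hv.1 hv.2 he hf
  · intro hf
    by_contra he
    exact not_both_sides hdisj hv.2 hv.1 hf he

lemma connected_side (hdisj : hSupp φ A₁ ∩ hSupp φ A₁ᶜ = ∅) {A : Set E}
    (hc : hConnected φ A) : A ⊆ A₁ ∨ A ⊆ A₁ᶜ := by
  obtain ⟨⟨e, he⟩, hchain⟩ := hc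
  have key : ∀ f, Relation.ReflTransGen
      (fun a b => a ∈ A ∧ b ∈ A ∧ ((φ a) ∩ (φ b)).Nonempty) e f → (f ∈ A₁ ↔ e ∈ A₁) := by
    intro f h
    induction h with
    | refl => exact Iff.rfl
    | tail h₁ h₂ ih => exact ((shared_vertex_side hdisj h₂.2.2).symm.trans ih)
  by_cases he1 : e ∈ A₁
  · left
    intro f hf
    exact (key f (hchain e he f hf)).2 he1
  · right
    intro f hf
    exact fun h => he1 ((key f (hchain e he f hf)).1 h)

end Sides

section PermAlgebra

variable {V E : Type} {φ : E → Finset V} {B : Set E}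

lemma parPerm_one : ParPerm φ B 1 := ⟨fun _ => rfl, fun _ _ => rfl⟩

lemma parPerm_inv {σ : Equiv.Perm E} (h : ParPerm φ B σ) : ParPerm φ B σ⁻¹ := by
  constructor
  · intro e
    conv_rhs => rw [← show σ (σ⁻¹ e) = e from σ.apply_symm_apply e]
    rw [h.1 (σ⁻¹ e)]
  · intro e he
    have h2 := h.2 e he
    calc σ⁻¹ e = σ⁻¹ (σ e) := by rw [h2]
    _ = e := σ.symm_apply_apply e

lemma parPerm_trans {σ τ : Equiv.Perm E} (hσ : ParPerm φ B σ) (hτ : ParPerm φ B τ) :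
    ParPerm φ B (σ.trans τ) := by
  constructor
  · intro e
    show φ (τ (σ e)) = φ e
    rw [hτ.1, hσ.1]
  · intro e he
    show τ (σ e) = e
    rw [hσ.2 e he, hτ.2 e he]

lemma perm_image_inv_image (σ : Equiv.Perm E) (A : Set E) : (σ⁻¹ : Equiv.Perm E) '' (σ '' A) = A := by
  rw [Set.image_image]
  simp

lemma perm_image_image_inv (σ : Equiv.Perm E) (A : Set E) : σ '' ((σ⁻¹ : Equiv.Perm E) '' A) = A := by
  rw [Set.image_image]
  simp

lemma orbEquiv_refl (S : Set (Set E)) : OrbEquiv φ B S S :=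
  ⟨1, parPerm_one, by simp⟩

lemma orbEquiv_symm {S S' : Set (Set E)} (h : OrbEquiv φ B S S') : OrbEquiv φ B S' S := by
  obtain ⟨σ, hσ, rfl⟩ := h
  refine ⟨σ⁻¹, parPerm_inv hσ, ?_⟩
  rw [← Set.image_comp]
  have hc : ((fun A : Set E => (σ⁻¹ : Equiv.Perm E) '' A) ∘ fun A : Set E => σ '' A) = fun A : Set E => A := by
    funext A
    exact perm_image_inv_image σ A
  rw [hc, Set.image_id']

lemma orbEquiv_trans {S S' S'' : Set (Set E)} (h : OrbEquiv φ B S S')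
    (h' : OrbEquiv φ B S' S'') : OrbEquiv φ B S S'' := by
  obtain ⟨σ, hσ, rfl⟩ := h
  obtain ⟨τ, hτ, rfl⟩ := h'
  refine ⟨σ.trans τ, parPerm_trans hσ hτ, ?_⟩
  rw [← Set.image_comp]
  refine Set.image_congr fun A _ => ?_
  show ⇑(σ.trans τ) '' A = τ '' (σ '' A)
  rw [Set.image_image]
  rfl

lemma partEquiv_conj_mp {σ : Equiv.Perm E} (hσ : ParPerm φ B σ) {A A' : Set E}
    (h : PartEquiv φ B A A') : PartEquiv φ B (σ '' A) (σ '' A') := by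
  obtain ⟨τ, hτ, rfl⟩ := h
  refine ⟨(σ⁻¹.trans τ).trans σ, parPerm_trans (parPerm_trans (parPerm_inv hσ) hτ) hσ, ?_⟩
  have hco : ⇑((σ⁻¹.trans τ).trans σ) = ⇑σ ∘ ⇑τ ∘ ⇑σ⁻¹ := rfl
  rw [hco, Set.image_comp, Set.image_comp, perm_image_inv_image]

lemma partEquiv_conj {σ : Equiv.Perm E} (hσ : ParPerm φ B σ) (A A' : Set E) :
    PartEquiv φ B A A' ↔ PartEquiv φ B (σ '' A) (σ '' A') := by
  constructor
  · exact partEquiv_conj_mp hσ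
  · intro h
    have h2 := partEquiv_conj_mp (parPerm_inv hσ) h
    rwa [perm_image_inv_image, perm_image_inv_image] at h2

variable [Finite E]

open Classical in
/-- The permutation acting as `σ` on `B` and as the identity elsewhere. -/
noncomputable def restrictPerm (B : Set E) (σ : Equiv.Perm E)
    (hside : ∀ e, σ e ∈ B ↔ e ∈ B) : Equiv.Perm E :=
  Equiv.ofBijective (fun e => if e ∈ B then σ e else e) (by
    have hinj : Function.Injective (fun e => if e ∈ B then σ e else e) := by
      intro a b hab
      by_cases ha : a ∈ B <;> by_cases hb : b ∈ B <;> simp only [ha, hb, if_true, if_false,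
        if_pos, if_neg, not_false_iff] at hab
      · exact σ.injective hab
      · exact absurd (hab ▸ (hside a).2 ha) hb
      · exact absurd ((hside b).2 hb) (hab ▸ fun h => ha h)
      · exact hab
    exact Finite.injective_iff_bijective.1 hinj)

open Classical in
lemma restrictPerm_apply (B : Set E) (σ : Equiv.Perm E)
    (hside : ∀ e, σ e ∈ B ↔ e ∈ B) (e : E) :
    restrictPerm B σ hside e = if e ∈ B then σ e else e := rfl

lemma restrictPerm_parPerm {B : Set E} {σ : Equiv.Perm E}
    (hside : ∀ e, σ e ∈ B ↔ e ∈ B) (hσφ : ∀ e, φ (σ e) = φ e) :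
    ParPerm φ B (restrictPerm B σ hside) := by
  constructor
  · intro e
    rw [restrictPerm_apply]
    by_cases h : e ∈ B
    · rw [if_pos h, hσφ]
    · rw [if_neg h]
  · intro e he
    rw [restrictPerm_apply, if_neg he]

lemma restrictPerm_image {B : Set E} {σ : Equiv.Perm E}
    (hside : ∀ e, σ e ∈ B ↔ e ∈ B) {A : Set E} (hA : A ⊆ B) :
    (restrictPerm B σ hside) '' A = σ '' A :=
  Set.image_congr fun e he => by rw [restrictPerm_apply, if_pos (hA he)]

lemma partEquiv_univ_iff {B : Set E}
    (hBside : ∀ (σ : Equiv.Perm E), (∀ e, φ (σ e) = φ e) → ∀ e, σ e ∈ B ↔ e ∈ B)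
    {A A' : Set E} (hA : A ⊆ B) :
    PartEquiv φ Set.univ A A' ↔ PartEquiv φ B A A' := by
  constructor
  · rintro ⟨σ, ⟨hσφ, -⟩, rfl⟩
    exact ⟨restrictPerm B σ (hBside σ hσφ), restrictPerm_parPerm (hBside σ hσφ) hσφ,
      restrictPerm_image (hBside σ hσφ) hA⟩
  · rintro ⟨σ, ⟨hσφ, -⟩, rfl⟩
    exact ⟨σ, ⟨hσφ, fun e he => absurd (Set.mem_univ e) he⟩, rfl⟩

end PermAlgebra

section Cross

variable {V E : Type} {φ : E → Finset V} {A₁ : Set E}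

lemma partEquiv_cross (hne : ∀ e : E, (φ e).Nonempty)
    (hdisj : hSupp φ A₁ ∩ hSupp φ A₁ᶜ = ∅) {A A' : Set E} (hA : A ⊆ A₁) (hA' : A' ⊆ A₁ᶜ)
    (hAne : A.Nonempty) : ¬ PartEquiv φ Set.univ A A' := by
  rintro ⟨σ, ⟨hσφ, -⟩, him⟩
  obtain ⟨e, he⟩ := hAne
  have h1 : σ e ∈ A' := him ▸ Set.mem_image_of_mem σ he
  have h2 : σ e ∈ A₁ := (side_iff hne hdisj hσφ e).2 (hA he)
  exact (hA' h1) h2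

lemma partEquiv_cross' (hne : ∀ e : E, (φ e).Nonempty)
    (hdisj : hSupp φ A₁ ∩ hSupp φ A₁ᶜ = ∅) {A A' : Set E} (hA : A ⊆ A₁ᶜ) (hA' : A' ⊆ A₁)
    (hAne : A.Nonempty) : ¬ PartEquiv φ Set.univ A A' := by
  rintro ⟨σ, ⟨hσφ, -⟩, him⟩
  obtain ⟨e, he⟩ := hAne
  have h1 : σ e ∈ A' := him ▸ Set.mem_image_of_mem σ he
  have h2 : σ e ∉ A₁ := fun hmem => (hA he) ((side_iff hne hdisj hσφ e).1 hmem)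
  exact h2 (hA' h1)

end Cross
section QuotSum

variable {α β γ δ : Type}

def quotSumEquiv (r : α ⊕ β → α ⊕ β → Prop) (rα : α → α → Prop) (rβ : β → β → Prop)
    (hαα : ∀ a a', r (.inl a) (.inl a') ↔ rα a a')
    (hββ : ∀ b b', r (.inr b) (.inr b') ↔ rβ b b')
    (hc₁ : ∀ a b, ¬ r (.inl a) (.inr b)) (hc₂ : ∀ b a, ¬ r (.inr b) (.inl a)) :
    Quot r ≃ Quot rα ⊕ Quot rβ where
  toFun := Quot.lift (Sum.elim (fun a => .inl (Quot.mk rα a)) (fun b => .inr (Quot.mk rβ b)))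
    (by
      rintro (a | b) (a' | b') h
      · exact congrArg Sum.inl (Quot.sound ((hαα a a').1 h))
      · exact absurd h (hc₁ a b')
      · exact absurd h (hc₂ b a')
      · exact congrArg Sum.inr (Quot.sound ((hββ b b').1 h)))
  invFun := Sum.elim
    (Quot.lift (fun a => Quot.mk r (.inl a)) (fun a a' h => Quot.sound ((hαα a a').2 h)))
    (Quot.lift (fun b => Quot.mk r (.inr b)) (fun b b' h => Quot.sound ((hββ b b').2 h)))
  left_inv := by
    intro q
    induction q using Quot.ind with
    | _ x => cases x <;> rfl
  right_inv := by
    intro p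
    cases p with
    | inl q =>
      induction q using Quot.ind with
      | _ a => rfl
    | inr q =>
      induction q using Quot.ind with
      | _ b => rfl

lemma card_fiber_inl (g₁ : α → γ) (g₂ : β → δ) (c : γ) :
    Nat.card {x : α ⊕ β // Sum.map g₁ g₂ x = Sum.inl c} = Nat.card {a : α // g₁ a = c} := by
  refine Nat.card_congr ⟨fun x => match x with
    | ⟨.inl a, h⟩ => ⟨a, by simpa using h⟩
    | ⟨.inr b, h⟩ => absurd h (by simp),
    fun a => ⟨.inl a.1, by simp [a.2]⟩, ?_, ?_⟩
  · rintro ⟨(a | b), h⟩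
    · rfl
    · exact absurd h (by simp)
  · rintro ⟨a, h⟩
    rfl

lemma card_fiber_inr (g₁ : α → γ) (g₂ : β → δ) (d : δ) :
    Nat.card {x : α ⊕ β // Sum.map g₁ g₂ x = Sum.inr d} = Nat.card {b : β // g₂ b = d} := by
  refine Nat.card_congr ⟨fun x => match x with
    | ⟨.inr b, h⟩ => ⟨b, by simpa using h⟩
    | ⟨.inl a, h⟩ => absurd h (by simp),
    fun b => ⟨.inr b.1, by simp [b.2]⟩, ?_, ?_⟩
  · rintro ⟨(a | b), h⟩
    · exact absurd h (by simp)
    · rfl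
  · rintro ⟨b, h⟩
    rfl

lemma finprod_fiber_congr {α α' γ γ' : Type} (eα : α ≃ α') (eγ : γ ≃ γ')
    (g : α → γ) (g' : α' → γ') (h : ∀ a, g' (eα a) = eγ (g a)) :
    (∏ᶠ c : γ, (Nat.card {a : α // g a = c} : ℚ)) =
      ∏ᶠ c' : γ', (Nat.card {a' : α' // g' a' = c'} : ℚ) := by
  rw [← finprod_comp_equiv eγ]
  refine finprod_congr fun c => ?_
  congr 1
  apply Nat.card_congr
  refine Equiv.subtypeEquiv eα fun a => ?_
  rw [h a]
  exact ⟨fun hh => by rw [hh], fun hh => eγ.injective hh⟩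

lemma finprod_sum_fibers [Finite α] [Finite β] [Finite γ] [Finite δ]
    (g₁ : α → γ) (g₂ : β → δ) :
    (∏ᶠ c : γ ⊕ δ, (Nat.card {x : α ⊕ β // Sum.map g₁ g₂ x = c} : ℚ)) =
      (∏ᶠ c : γ, (Nat.card {a : α // g₁ a = c} : ℚ)) *
        ∏ᶠ d : δ, (Nat.card {b : β // g₂ b = d} : ℚ) := by
  letI := Fintype.ofFinite γ
  letI := Fintype.ofFinite δ
  rw [finprod_eq_prod_of_fintype, finprod_eq_prod_of_fintype, finprod_eq_prod_of_fintype,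
    Fintype.prod_sum_type]
  congr 1
  · exact Finset.prod_congr rfl fun c _ => by rw [card_fiber_inl]
  · exact Finset.prod_congr rfl fun d _ => by rw [card_fiber_inr]

end QuotSum

section AlphaS

variable {V E : Type} {φ : E → Finset V}

lemma alphaS_congr {B : Set E} {σ : Equiv.Perm E} (hσ : ParPerm φ B σ) (S : Set (Set E)) :
    alphaS φ B ((fun A : Set E => σ '' A) '' S) = alphaS φ B S := by
  symm
  unfold alphaS
  have hinj : Function.Injective (fun A : Set E => σ '' A) := Set.image_injective.2 σ.injective
  let eα : ↥S ≃ ↥((fun A : Set E => σ '' A) '' S) := Equiv.Set.image _ S hinj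
  have heα : ∀ A : ↥S, ((eα A : ↥((fun A : Set E => σ '' A) '' S)) : Set E) = σ '' (A : Set E) :=
    fun A => rfl
  let eγ : Quot (fun A A' : ↥S => PartEquiv φ B (A : Set E) (A' : Set E)) ≃
      Quot (fun A A' : ↥((fun A : Set E => σ '' A) '' S) =>
        PartEquiv φ B (A : Set E) (A' : Set E)) :=
    Quot.congr eα (fun A A' => by
      rw [heα A, heα A']
      exact partEquiv_conj hσ A.1 A'.1)
  exact finprod_fiber_congr eα eγ (Quot.mk _) (Quot.mk _) (fun a => rfl)

lemma alphaS_union [Finite E] (hne : ∀ e : E, (φ e).Nonempty) {A₁ : Set E}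
    (hdisj : hSupp φ A₁ ∩ hSupp φ A₁ᶜ = ∅) (S₁ S₂ : Set (Set E))
    (h₁ : ∀ A ∈ S₁, A.Nonempty ∧ A ⊆ A₁) (h₂ : ∀ A ∈ S₂, A.Nonempty ∧ A ⊆ A₁ᶜ) :
    alphaS φ Set.univ (S₁ ∪ S₂) = alphaS φ A₁ S₁ * alphaS φ A₁ᶜ S₂ := by
  classical
  have hdS : Disjoint S₁ S₂ := by
    rw [Set.disjoint_left]
    intro A hA1 hA2
    obtain ⟨e, he⟩ := (h₁ A hA1).1
    exact ((h₂ A hA2).2 he) ((h₁ A hA1).2 he)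
  have hval : ∀ A : ↥(S₁ ∪ S₂),
      Sum.elim (Subtype.val) (Subtype.val) (Equiv.Set.union hdS A) = (A : Set E) := by
    rintro ⟨A, hA⟩
    by_cases h : A ∈ S₁
    · rw [Equiv.Set.union_apply_left hdS h]
      rfl
    · rw [Equiv.Set.union_apply_right hdS (hA.resolve_left h)]
      rfl
  have hside₁ : ∀ (σ : Equiv.Perm E), (∀ e, φ (σ e) = φ e) → ∀ e, σ e ∈ A₁ ↔ e ∈ A₁ :=
    fun σ hσ e => side_iff hne hdisj hσ e
  have hside₂ : ∀ (σ : Equiv.Perm E), (∀ e, φ (σ e) = φ e) → ∀ e, σ e ∈ A₁ᶜ ↔ e ∈ A₁ᶜ :=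
    fun σ hσ e => by
      have h := side_iff hne hdisj hσ e
      simp only [Set.mem_compl_iff]
      exact not_congr h
  have hαα : ∀ a a' : ↥S₁,
      (PartEquiv φ Set.univ (Sum.elim (Subtype.val) (Subtype.val) (Sum.inl a : ↥S₁ ⊕ ↥S₂))
        (Sum.elim (Subtype.val) (Subtype.val) (Sum.inl a' : ↥S₁ ⊕ ↥S₂))) ↔
        PartEquiv φ A₁ (a : Set E) (a' : Set E) :=
    fun a a' => partEquiv_univ_iff hside₁ ((h₁ a.1 a.2).2)
  have hββ : ∀ b b' : ↥S₂,
      (PartEquiv φ Set.univ (Sum.elim (Subtype.val) (Subtype.val) (Sum.inr b : ↥S₁ ⊕ ↥S₂))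
        (Sum.elim (Subtype.val) (Subtype.val) (Sum.inr b' : ↥S₁ ⊕ ↥S₂))) ↔
        PartEquiv φ A₁ᶜ (b : Set E) (b' : Set E) :=
    fun b b' => partEquiv_univ_iff hside₂ ((h₂ b.1 b.2).2)
  have hc₁ : ∀ (a : ↥S₁) (b : ↥S₂),
      ¬ PartEquiv φ Set.univ (Sum.elim (Subtype.val) (Subtype.val) (Sum.inl a : ↥S₁ ⊕ ↥S₂))
        (Sum.elim (Subtype.val) (Subtype.val) (Sum.inr b : ↥S₁ ⊕ ↥S₂)) :=
    fun a b => partEquiv_cross hne hdisj (h₁ a.1 a.2).2 (h₂ b.1 b.2).2 (h₁ a.1 a.2).1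
  have hc₂ : ∀ (b : ↥S₂) (a : ↥S₁),
      ¬ PartEquiv φ Set.univ (Sum.elim (Subtype.val) (Subtype.val) (Sum.inr b : ↥S₁ ⊕ ↥S₂))
        (Sum.elim (Subtype.val) (Subtype.val) (Sum.inl a : ↥S₁ ⊕ ↥S₂)) :=
    fun b a => partEquiv_cross' hne hdisj (h₂ b.1 b.2).2 (h₁ a.1 a.2).2 (h₂ b.1 b.2).1
  let r' : (↥S₁ ⊕ ↥S₂) → (↥S₁ ⊕ ↥S₂) → Prop := fun x y =>
    PartEquiv φ Set.univ (Sum.elim (Subtype.val) (Subtype.val) x)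
      (Sum.elim (Subtype.val) (Subtype.val) y)
  let r₁ : ↥S₁ → ↥S₁ → Prop := fun A A' => PartEquiv φ A₁ (A : Set E) (A' : Set E)
  let r₂ : ↥S₂ → ↥S₂ → Prop := fun A A' => PartEquiv φ A₁ᶜ (A : Set E) (A' : Set E)
  let eQ2 : Quot r' ≃ Quot r₁ ⊕ Quot r₂ := quotSumEquiv r' r₁ r₂ hαα hββ hc₁ hc₂
  let eQ1 : Quot (fun A A' : ↥(S₁ ∪ S₂) => PartEquiv φ Set.univ (A : Set E) (A' : Set E)) ≃
      Quot r' :=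
    Quot.congr (Equiv.Set.union hdS) (fun A A' => by
      show PartEquiv φ Set.univ (A : Set E) (A' : Set E) ↔ _
      rw [show r' (Equiv.Set.union hdS A) (Equiv.Set.union hdS A') =
        PartEquiv φ Set.univ (Sum.elim (Subtype.val) (Subtype.val) (Equiv.Set.union hdS A))
          (Sum.elim (Subtype.val) (Subtype.val) (Equiv.Set.union hdS A')) from rfl,
        hval A, hval A'])
  have hcompat : ∀ A : ↥(S₁ ∪ S₂),
      Sum.map (Quot.mk r₁) (Quot.mk r₂) (Equiv.Set.union hdS A) =
        (eQ1.trans eQ2) (Quot.mk _ A) := by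
    intro A
    have hstep : (eQ1.trans eQ2) (Quot.mk _ A) = eQ2 (Quot.mk r' (Equiv.Set.union hdS A)) := rfl
    rw [hstep]
    cases h : Equiv.Set.union hdS A with
    | inl a => rfl
    | inr b => rfl
  calc alphaS φ Set.univ (S₁ ∪ S₂)
      = ∏ᶠ c' : Quot r₁ ⊕ Quot r₂,
          (Nat.card {x : ↥S₁ ⊕ ↥S₂ // Sum.map (Quot.mk r₁) (Quot.mk r₂) x = c'} : ℚ) :=
        finprod_fiber_congr (Equiv.Set.union hdS) (eQ1.trans eQ2) (Quot.mk _)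
          (Sum.map (Quot.mk r₁) (Quot.mk r₂)) hcompat
    _ = _ := finprod_sum_fibers _ _

end AlphaS
section Admissible

variable {V E : Type} [DecidableEq V] {φ : E → Finset V} {A₁ : Set E} {k : ℕ}

lemma admissible_split (hdisj : hSupp φ A₁ ∩ hSupp φ A₁ᶜ = ∅) {S : Set (Set E)}
    (hS : hAdmissible φ k Set.univ S) :
    hAdmissible φ k A₁ {A ∈ S | A ⊆ A₁} ∧ hAdmissible φ k A₁ᶜ {A ∈ S | A ⊆ A₁ᶜ} ∧
      S = {A ∈ S | A ⊆ A₁} ∪ {A ∈ S | A ⊆ A₁ᶜ} := by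
  obtain ⟨hparts, hdisjp, hcover⟩ := hS
  have hsides : ∀ A ∈ S, A ⊆ A₁ ∨ A ⊆ A₁ᶜ := fun A hA =>
    connected_side hdisj (hparts A hA).2.2.1
  refine ⟨⟨?_, ?_, ?_⟩, ⟨?_, ?_, ?_⟩, ?_⟩
  · rintro A ⟨hA, hA1⟩
    exact ⟨(hparts A hA).1, hA1, (hparts A hA).2.2⟩
  · rintro A ⟨hA, -⟩ A' ⟨hA', -⟩ hne'
    exact hdisjp A hA A' hA' hne'
  · intro e he
    obtain ⟨A, hA, heA⟩ := hcover e (Set.mem_univ e)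
    rcases hsides A hA with h | h
    · exact ⟨A, ⟨hA, h⟩, heA⟩
    · exact absurd he (h heA)
  · rintro A ⟨hA, hA1⟩
    exact ⟨(hparts A hA).1, hA1, (hparts A hA).2.2⟩
  · rintro A ⟨hA, -⟩ A' ⟨hA', -⟩ hne'
    exact hdisjp A hA A' hA' hne'
  · intro e he
    obtain ⟨A, hA, heA⟩ := hcover e (Set.mem_univ e)
    rcases hsides A hA with h | h
    · exact absurd (h heA) he
    · exact ⟨A, ⟨hA, h⟩, heA⟩
  · ext A
    constructor
    · intro hA
      rcases hsides A hA with h | h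
      · exact Or.inl ⟨hA, h⟩
      · exact Or.inr ⟨hA, h⟩
    · rintro (⟨hA, -⟩ | ⟨hA, -⟩) <;> exact hA

lemma admissible_union {S₁ S₂ : Set (Set E)} (h₁ : hAdmissible φ k A₁ S₁)
    (h₂ : hAdmissible φ k A₁ᶜ S₂) : hAdmissible φ k Set.univ (S₁ ∪ S₂) := by
  have cross : ∀ A A' : Set E, A ⊆ A₁ → A' ⊆ A₁ᶜ → A ∩ A' = ∅ := by
    intro A A' hA hA'
    ext e
    simp only [Set.mem_inter_iff, Set.mem_empty_iff_false, iff_false]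
    rintro ⟨he, he'⟩
    exact (hA' he') (hA he)
  refine ⟨?_, ?_, ?_⟩
  · rintro A (hA | hA)
    · exact ⟨(h₁.1 A hA).1, Set.subset_univ A, (h₁.1 A hA).2.2⟩
    · exact ⟨(h₂.1 A hA).1, Set.subset_univ A, (h₂.1 A hA).2.2⟩
  · rintro A (hA | hA) A' (hA' | hA') hne'
    · exact h₁.2.1 A hA A' hA' hne'
    · exact cross A A' (h₁.1 A hA).2.1 (h₂.1 A' hA').2.1
    · have h := cross A' A (h₁.1 A' hA').2.1 (h₂.1 A hA).2.1
      rw [Set.inter_comm] at h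
      exact h
    · exact h₂.2.1 A hA A' hA' hne'
  · intro e _
    by_cases he : e ∈ A₁
    · obtain ⟨A, hA, heA⟩ := h₁.2.2 e he
      exact ⟨A, Or.inl hA, heA⟩
    · obtain ⟨A, hA, heA⟩ := h₂.2.2 e he
      exact ⟨A, Or.inr hA, heA⟩

end Admissible

section DeltaTermLemmas

variable {V E : Type} [Fintype V] [Fintype E] [LinearOrder V] {φ : E → Finset V}

lemma deltaTerm_congr {k n : ℕ} {B : Set E} {S S' : Set (Set E)}
    (h : OrbEquiv φ B S S') : deltaTerm φ k n B S' = deltaTerm φ k n B S := by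
  obtain ⟨σ, hσ, rfl⟩ := h
  unfold deltaTerm
  have hinj : Function.Injective (fun A : Set E => σ '' A) := Set.image_injective.2 σ.injective
  have hcard : Nat.card ↥((fun A : Set E => σ '' A) '' S) = Nat.card ↥S :=
    Nat.card_congr (Equiv.Set.image _ S hinj).symm
  have hprod : (∏ᶠ A ∈ (fun A : Set E => σ '' A) '' S, assocC φ A) = ∏ᶠ A ∈ S, assocC φ A := by
    symm
    refine finprod_mem_eq_of_bijOn _ (Set.InjOn.bijOn_image (Function.Injective.injOn hinj)) ?_
    exact fun A _ => (assocC_image φ σ hσ.1 A).symm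
  rw [hcard, hprod, alphaS_congr hσ S]

lemma deltaTerm_mul [DecidableEq V] {k n : ℕ}
    (hne : ∀ e : E, (φ e).Nonempty) {A₁ : Set E}
    (hdisj : hSupp φ A₁ ∩ hSupp φ A₁ᶜ = ∅) (S₁ S₂ : Set (Set E))
    (h₁ : ∀ A ∈ S₁, A.Nonempty ∧ A ⊆ A₁) (h₂ : ∀ A ∈ S₂, A.Nonempty ∧ A ⊆ A₁ᶜ) :
    deltaTerm φ k n Set.univ (S₁ ∪ S₂) = deltaTerm φ k n A₁ S₁ * deltaTerm φ k n A₁ᶜ S₂ := by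
  classical
  have hdS : Disjoint S₁ S₂ := by
    rw [Set.disjoint_left]
    intro A hA1 hA2
    obtain ⟨e, he⟩ := (h₁ A hA1).1
    exact ((h₂ A hA2).2 he) ((h₁ A hA1).2 he)
  unfold deltaTerm
  have hcard : Nat.card ↥(S₁ ∪ S₂) = Nat.card ↥S₁ + Nat.card ↥S₂ := by
    rw [Nat.card_congr (Equiv.Set.union hdS), Nat.card_sum]
  have hprod : (∏ᶠ A ∈ S₁ ∪ S₂, assocC φ A) =
      (∏ᶠ A ∈ S₁, assocC φ A) * ∏ᶠ A ∈ S₂, assocC φ A :=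
    finprod_mem_union hdS (Set.toFinite S₁) (Set.toFinite S₂)
  rw [hcard, hprod, alphaS_union hne hdisj S₁ S₂ h₁ h₂, pow_add, div_mul_div_comm]
  congr 1
  ring

lemma assocC_eq_zero {e : E} (he : φ e = ∅) {A : Set E} (heA : e ∈ A) :
    assocC φ A = 0 := by
  haveI : IsEmpty {l : List (V × E) // IsRooting φ A l ∧ DigEulerian (rψ φ l)} := by
    constructor
    rintro ⟨l, ⟨-, -, h3, h4, -⟩, -⟩
    have hel : e ∈ l.map Prod.snd := (h3 e).2 heA
    rcases List.mem_map.1 hel with ⟨p, hp, rfl⟩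
    have hmem := h4 p hp
    rw [he] at hmem
    exact absurd hmem (Finset.notMem_empty _)
  exact finsum_of_isEmpty _

lemma deltaTerm_eq_zero [DecidableEq V] {k n : ℕ} {B : Set E}
    {S : Set (Set E)} (hadm : hAdmissible φ k B S) {e : E} (he : φ e = ∅) (heB : e ∈ B) :
    deltaTerm φ k n B S = 0 := by
  obtain ⟨A, hAS, heA⟩ := hadm.2.2 e heB
  have hfin : S.Finite := Set.toFinite S
  have hprod : (∏ᶠ A ∈ S, assocC φ A) = 0 := by
    rw [← hfin.coe_toFinset, finprod_mem_coe_finset]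
    exact Finset.prod_eq_zero (hfin.mem_toFinset.2 hAS) (assocC_eq_zero he heA)
  unfold deltaTerm
  rw [hprod, mul_zero, zero_div]

end DeltaTermLemmas
/-- Let `X₁` and `X₂` be Veblen multi-hypergraphs of rank `k` with
disjoint vertex sets and disjoint edge sets, and let `X = X₁ ⊔ X₂`.  Then for every
`n ≥ 0`, `Δ(n, X) = Δ(n, X₁) · Δ(n, X₂)`.  Here `X` is presented by `φ : E → Finset V`,
the edges of `X₁` being `A₁` and those of `X₂` its complement, and
`Δ(n, ·) = ∑_{𝐒 ∈ S̃(·)} (-(k-1)ⁿ)^{c(𝐒)} C_𝐒 / α_𝐒` is expressed via an arbitrary set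
of representatives of the orbits `S̃(·)`. -/
theorem stmt_14 {V E : Type} [Fintype V] [Fintype E] [LinearOrder V] [DecidableEq V]
    [DecidableEq E]
    (k : ℕ) (φ : E → Finset V) (hφ : ∀ e : E, (φ e).card = k)
    (A₁ : Set E)
    (hVeb₁ : hVeblen φ k A₁) (hVeb₂ : hVeblen φ k A₁ᶜ)
    (hdisj : hSupp φ A₁ ∩ hSupp φ A₁ᶜ = ∅)
    (n : ℕ)
    (T T₁ T₂ : Set (Set (Set E)))
    (hT : IsOrbitReps φ k Set.univ T)
    (hT₁ : IsOrbitReps φ k A₁ T₁)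
    (hT₂ : IsOrbitReps φ k A₁ᶜ T₂) :
    (∑ᶠ S ∈ T, deltaTerm φ k n Set.univ S) =
      (∑ᶠ S ∈ T₁, deltaTerm φ k n A₁ S) * (∑ᶠ S ∈ T₂, deltaTerm φ k n A₁ᶜ S) := by
  classical
  by_cases hne : ∀ e : E, (φ e).Nonempty
  · -- Main case: every edge has nonempty vertex set.
    have hside₂ : ∀ (σ : Equiv.Perm E), (∀ e, φ (σ e) = φ e) → ∀ e, σ e ∈ A₁ᶜ ↔ e ∈ A₁ᶜ :=
      fun σ hσ e => by
        have h := side_iff hne hdisj hσ e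
        simp only [Set.mem_compl_iff]
        exact not_congr h
    have hsplit : ∀ S : Set (Set E), hAdmissible φ k Set.univ S →
        hAdmissible φ k A₁ {A ∈ S | A ⊆ A₁} ∧ hAdmissible φ k A₁ᶜ {A ∈ S | A ⊆ A₁ᶜ} ∧
          S = {A ∈ S | A ⊆ A₁} ∪ {A ∈ S | A ⊆ A₁ᶜ} :=
      fun S hS => admissible_split hdisj hS
    set Φ : Set (Set E) → Set (Set E) × Set (Set E) := fun S =>
      (if h : hAdmissible φ k A₁ {A ∈ S | A ⊆ A₁} then (hT₁.2 _ h).choose else ∅,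
       if h : hAdmissible φ k A₁ᶜ {A ∈ S | A ⊆ A₁ᶜ} then (hT₂.2 _ h).choose else ∅)
      with hΦdef
    have hΦfst : ∀ S (h : hAdmissible φ k A₁ {A ∈ S | A ⊆ A₁}),
        (Φ S).1 = (hT₁.2 _ h).choose := by
      intro S h
      simp only [hΦdef, dif_pos h]
    have hΦsnd : ∀ S (h : hAdmissible φ k A₁ᶜ {A ∈ S | A ⊆ A₁ᶜ}),
        (Φ S).2 = (hT₂.2 _ h).choose := by
      intro S h
      simp only [hΦdef, dif_pos h]
    have hΦ1 : ∀ S ∈ T, (Φ S).1 ∈ T₁ ∧ OrbEquiv φ A₁ {A ∈ S | A ⊆ A₁} (Φ S).1 := by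
      intro S hS
      have h := (hsplit S (hT.1 S hS)).1
      rw [hΦfst S h]
      exact (hT₁.2 _ h).choose_spec.1
    have hΦ2 : ∀ S ∈ T, (Φ S).2 ∈ T₂ ∧ OrbEquiv φ A₁ᶜ {A ∈ S | A ⊆ A₁ᶜ} (Φ S).2 := by
      intro S hS
      have h := (hsplit S (hT.1 S hS)).2.1
      rw [hΦsnd S h]
      exact (hT₂.2 _ h).choose_spec.1
    have hval : ∀ S ∈ T, deltaTerm φ k n Set.univ S =
        deltaTerm φ k n A₁ (Φ S).1 * deltaTerm φ k n A₁ᶜ (Φ S).2 := by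
      intro S hS
      obtain ⟨hadm1, hadm2, hSeq⟩ := hsplit S (hT.1 S hS)
      have h₁ : ∀ A ∈ {A ∈ S | A ⊆ A₁}, A.Nonempty ∧ A ⊆ A₁ := fun A hA =>
        ⟨(hadm1.1 A hA).1, hA.2⟩
      have h₂ : ∀ A ∈ {A ∈ S | A ⊆ A₁ᶜ}, A.Nonempty ∧ A ⊆ A₁ᶜ := fun A hA =>
        ⟨(hadm2.1 A hA).1, hA.2⟩
      calc deltaTerm φ k n Set.univ S
          = deltaTerm φ k n Set.univ ({A ∈ S | A ⊆ A₁} ∪ {A ∈ S | A ⊆ A₁ᶜ}) := by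
            rw [← hSeq]
        _ = deltaTerm φ k n A₁ {A ∈ S | A ⊆ A₁} * deltaTerm φ k n A₁ᶜ {A ∈ S | A ⊆ A₁ᶜ} :=
            deltaTerm_mul hne hdisj _ _ h₁ h₂
        _ = deltaTerm φ k n A₁ (Φ S).1 * deltaTerm φ k n A₁ᶜ (Φ S).2 := by
            rw [deltaTerm_congr (hΦ1 S hS).2, deltaTerm_congr (hΦ2 S hS).2]
    have hmaps : Set.MapsTo Φ T (T₁ ×ˢ T₂) := fun S hS => ⟨(hΦ1 S hS).1, (hΦ2 S hS).1⟩
    have hinjOn : Set.InjOn Φ T := by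
      intro S hS S' hS' hEq
      have hfst : (Φ S).1 = (Φ S').1 := by rw [hEq]
      have hsnd : (Φ S).2 = (Φ S').2 := by rw [hEq]
      have e1 := (hΦ1 S hS).2
      have e1' := (hΦ1 S' hS').2
      rw [← hfst] at e1'
      have e2 := (hΦ2 S hS).2
      have e2' := (hΦ2 S' hS').2
      rw [← hsnd] at e2'
      have hOE1 : OrbEquiv φ A₁ {A ∈ S | A ⊆ A₁} {A ∈ S' | A ⊆ A₁} :=
        orbEquiv_trans e1 (orbEquiv_symm e1')
      have hOE2 : OrbEquiv φ A₁ᶜ {A ∈ S | A ⊆ A₁ᶜ} {A ∈ S' | A ⊆ A₁ᶜ} :=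
        orbEquiv_trans e2 (orbEquiv_symm e2')
      obtain ⟨σ₁, hσ₁, him₁⟩ := hOE1
      obtain ⟨σ₂, hσ₂, him₂⟩ := hOE2
      have hσφ : ∀ e, φ ((σ₁.trans σ₂) e) = φ e := fun e => by
        show φ (σ₂ (σ₁ e)) = φ e
        rw [hσ₂.1, hσ₁.1]
      have hagree1 : ∀ A ∈ {A ∈ S | A ⊆ A₁}, (σ₁.trans σ₂) '' A = σ₁ '' A := by
        intro A hA
        refine Set.image_congr fun e he => ?_
        show σ₂ (σ₁ e) = σ₁ e
        apply hσ₂.2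
        have hmem : σ₁ e ∈ A₁ := (side_iff hne hdisj hσ₁.1 e).2 (hA.2 he)
        simp [Set.mem_compl_iff, hmem]
      have hagree2 : ∀ A ∈ {A ∈ S | A ⊆ A₁ᶜ}, (σ₁.trans σ₂) '' A = σ₂ '' A := by
        intro A hA
        refine Set.image_congr fun e he => ?_
        show σ₂ (σ₁ e) = σ₂ e
        rw [hσ₁.2 e (hA.2 he)]
      have hSeq := (hsplit S (hT.1 S hS)).2.2
      have hSeq' := (hsplit S' (hT.1 S' hS')).2.2
      have himS : (fun A : Set E => (σ₁.trans σ₂) '' A) '' S = S' := by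
        conv_lhs => rw [hSeq]
        rw [Set.image_union, Set.image_congr hagree1, Set.image_congr hagree2,
          him₁, him₂, ← hSeq']
      have hOE : OrbEquiv φ Set.univ S S' :=
        ⟨σ₁.trans σ₂, ⟨hσφ, fun e he => absurd (Set.mem_univ e) he⟩, himS⟩
      exact (hT.2 S (hT.1 S hS)).unique ⟨hS, orbEquiv_refl S⟩ ⟨hS', hOE⟩
    have hsurjOn : Set.SurjOn Φ T (T₁ ×ˢ T₂) := by
      rintro ⟨R₁, R₂⟩ ⟨hR₁, hR₂⟩
      have hadmR₁ := hT₁.1 R₁ hR₁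
      have hadmR₂ := hT₂.1 R₂ hR₂
      have hadmU : hAdmissible φ k Set.univ (R₁ ∪ R₂) := admissible_union hadmR₁ hadmR₂
      obtain ⟨S, ⟨hS, hOE⟩, -⟩ := hT.2 _ hadmU
      refine ⟨S, hS, ?_⟩
      obtain ⟨σ, ⟨hσφ, -⟩, himS⟩ := hOE
      have hs1 : {A ∈ S | A ⊆ A₁} = (fun A : Set E => σ '' A) '' R₁ := by
        rw [← himS, Set.image_union]
        ext A
        constructor
        · rintro ⟨hA, hA1⟩
          rcases hA with h | h
          · exact h
          · exfalso
            obtain ⟨B, hB, rfl⟩ := h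
            obtain ⟨e, he⟩ := (hadmR₂.1 B hB).1
            have hc : σ e ∈ A₁ᶜ :=
              image_side_compl hne hdisj hσφ (hadmR₂.1 B hB).2.1 (Set.mem_image_of_mem _ he)
            exact hc (hA1 (Set.mem_image_of_mem _ he))
        · intro h
          refine ⟨Or.inl h, ?_⟩
          obtain ⟨B, hB, rfl⟩ := h
          exact image_side hne hdisj hσφ (hadmR₁.1 B hB).2.1
      have hs2 : {A ∈ S | A ⊆ A₁ᶜ} = (fun A : Set E => σ '' A) '' R₂ := by
        rw [← himS, Set.image_union]
        ext A
        constructor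
        · rintro ⟨hA, hA1⟩
          rcases hA with h | h
          · exfalso
            obtain ⟨B, hB, rfl⟩ := h
            obtain ⟨e, he⟩ := (hadmR₁.1 B hB).1
            have hc : σ e ∈ A₁ :=
              image_side hne hdisj hσφ (hadmR₁.1 B hB).2.1 (Set.mem_image_of_mem _ he)
            exact (hA1 (Set.mem_image_of_mem _ he)) hc
          · exact h
        · intro h
          refine ⟨Or.inr h, ?_⟩
          obtain ⟨B, hB, rfl⟩ := h
          exact image_side_compl hne hdisj hσφ (hadmR₂.1 B hB).2.1
      have hOE1 : OrbEquiv φ A₁ R₁ {A ∈ S | A ⊆ A₁} := by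
        rw [hs1]
        refine ⟨restrictPerm A₁ σ (fun e => side_iff hne hdisj hσφ e),
          restrictPerm_parPerm _ hσφ, ?_⟩
        refine Set.image_congr fun B hB => ?_
        exact restrictPerm_image _ (hadmR₁.1 B hB).2.1
      have hOE2 : OrbEquiv φ A₁ᶜ R₂ {A ∈ S | A ⊆ A₁ᶜ} := by
        rw [hs2]
        refine ⟨restrictPerm A₁ᶜ σ (hside₂ σ hσφ),
          restrictPerm_parPerm _ hσφ, ?_⟩
        refine Set.image_congr fun B hB => ?_
        exact restrictPerm_image _ (hadmR₂.1 B hB).2.1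
      have hadm1 : hAdmissible φ k A₁ {A ∈ S | A ⊆ A₁} := (hsplit S (hT.1 S hS)).1
      have hadm2 : hAdmissible φ k A₁ᶜ {A ∈ S | A ⊆ A₁ᶜ} := (hsplit S (hT.1 S hS)).2.1
      have hfst : (Φ S).1 = R₁ := by
        rw [hΦfst S hadm1]
        exact ((hT₁.2 _ hadm1).choose_spec.2 R₁ ⟨hR₁, orbEquiv_symm hOE1⟩).symm
      have hsnd : (Φ S).2 = R₂ := by
        rw [hΦsnd S hadm2]
        exact ((hT₂.2 _ hadm2).choose_spec.2 R₂ ⟨hR₂, orbEquiv_symm hOE2⟩).symm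
      exact Prod.ext hfst hsnd
    rw [finsum_mem_eq_of_bijOn
      (g := fun p : Set (Set E) × Set (Set E) =>
        deltaTerm φ k n A₁ p.1 * deltaTerm φ k n A₁ᶜ p.2)
      Φ ⟨hmaps, hinjOn, hsurjOn⟩ hval]
    have hfin1 : T₁.Finite := Set.toFinite _
    have hfin2 : T₂.Finite := Set.toFinite _
    rw [← hfin1.coe_toFinset, ← hfin2.coe_toFinset, ← Finset.coe_product,
      finsum_mem_coe_finset, finsum_mem_coe_finset, finsum_mem_coe_finset,
      Finset.sum_mul_sum, Finset.sum_product]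
  · -- Degenerate case: some edge has empty vertex set; all terms vanish.
    push_neg at hne
    obtain ⟨e, he⟩ := hne
    have hL : (∑ᶠ S ∈ T, deltaTerm φ k n Set.univ S) = 0 := by
      rw [finsum_mem_congr rfl
        (fun S hS => deltaTerm_eq_zero (hT.1 S hS) he (Set.mem_univ e))]
      exact finsum_mem_zero T
    rw [hL]
    by_cases heA : e ∈ A₁
    · have hR : (∑ᶠ S ∈ T₁, deltaTerm φ k n A₁ S) = 0 := by
        rw [finsum_mem_congr rfl (fun S hS => deltaTerm_eq_zero (hT₁.1 S hS) he heA)]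
        exact finsum_mem_zero T₁
      rw [hR, zero_mul]
    · have hR : (∑ᶠ S ∈ T₂, deltaTerm φ k n A₁ᶜ S) = 0 := by
        rw [finsum_mem_congr rfl (fun S hS => deltaTerm_eq_zero (hT₂.1 S hS) he heA)]
        exact finsum_mem_zero T₂
      rw [hR, mul_zero]
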